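/- Let G be a compact Hausdorff topological group with normalized Haar probability measure μ, and let T : G → G be a measure-preserving map. Suppose there exists an open normal subgroup N of G with N ≠ G such that T factors through the quotient map π_N : G → G/N. Then T is not totally ergodic: there exists n ≥ 1 such that the n-fold iterate T^n is not ergodic with respect to μ. -/

import Mathlib

open MeasureTheory

/-- `T` factors through the quotient map `G → G/N`. -/
def MapFactorsThrough {G : Type*} [Group G] (T : G → G) (N : Subgroup G) : Prop :=
  ∀ x y : G, x⁻¹ * y ∈ N → (T x)⁻¹ * T y ∈ N

theorem stmt7 {G : Type*} [Group G] [TopologicalSpace G] [IsTopologicalGroup G]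
    [CompactSpace G] [T2Space G] [MeasurableSpace G] [BorelSpace G]
    (μ : Measure G) [μ.IsHaarMeasure] [IsProbabilityMeasure μ]
    (T : G → G) (hmeas : Measurable T)
    (hMP : ∀ S : Set G, MeasurableSet S → μ (T ⁻¹' S) = μ S)
    (N : Subgroup G) (hN : N.Normal) (hopen : IsOpen (N : Set G)) (hne : N ≠ ⊤)
    (hfac : MapFactorsThrough T N) :
    ∃ n : ℕ, 1 ≤ n ∧
      ¬ (∀ S : Set G, MeasurableSet S → T^[n] ⁻¹' S = S → μ S = 0 ∨ μ S = 1) := by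
  classical
  have hQfin : Finite (G ⧸ N) := N.quotient_finite_of_isOpen hopen
  set π : G → G ⧸ N := QuotientGroup.mk with hπ
  -- the induced map on the quotient
  let f : G ⧸ N → G ⧸ N := Quotient.map' T (fun x y h => by
    rw [QuotientGroup.leftRel_apply] at h ⊢
    exact hfac x y h)
  have hcomm : ∀ x : G, f (π x) = π (T x) := fun x => rfl
  have hcommn : ∀ (n : ℕ) (x : G), f^[n] (π x) = π (T^[n] x) := by
    intro n
    induction n with
    | zero => intro x; rfl
    | succ k ih =>
      intro x
      rw [Function.iterate_succ_apply, Function.iterate_succ_apply, hcomm, ih]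
  -- cosets
  have hcoset : ∀ x : G, π ⁻¹' {π x} = (fun y => x⁻¹ * y) ⁻¹' (N : Set G) := by
    intro x
    ext y
    simp only [Set.mem_preimage, Set.mem_singleton_iff, SetLike.mem_coe]
    constructor
    · intro h; exact (QuotientGroup.eq).mp h.symm
    · intro h; exact ((QuotientGroup.eq).mpr h).symm
  have hcoset_open : ∀ q : G ⧸ N, IsOpen (π ⁻¹' {q}) := by
    intro q
    obtain ⟨x, rfl⟩ := Quotient.exists_rep q
    rw [hcoset]
    exact hopen.preimage (continuous_const.mul continuous_id)
  have hcoset_meas : ∀ q : G ⧸ N, μ (π ⁻¹' {q}) = μ (N : Set G) := by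
    intro q
    obtain ⟨x, rfl⟩ := Quotient.exists_rep q
    rw [hcoset]
    exact measure_preimage_mul μ x⁻¹ _
  have hc_pos : 0 < μ (N : Set G) := hopen.measure_pos μ ⟨1, N.one_mem⟩
  have hc_fin : μ (N : Set G) ≠ ⊤ := measure_ne_top μ _
  -- T preimage of coset
  have hpre : ∀ q : G ⧸ N, T ⁻¹' (π ⁻¹' {q}) = π ⁻¹' (f ⁻¹' {q}) := by
    intro q
    ext x
    simp only [Set.mem_preimage, Set.mem_singleton_iff, ← hcomm]
  -- f is injective
  have hinj : Function.Injective f := by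
    intro p q hpq
    by_contra hne'
    obtain ⟨x, rfl⟩ := Quotient.exists_rep p
    obtain ⟨y, rfl⟩ := Quotient.exists_rep q
    have hsub : π ⁻¹' {Quotient.mk'' x} ∪ π ⁻¹' {Quotient.mk'' y}
        ⊆ T ⁻¹' (π ⁻¹' {f (Quotient.mk'' x)}) := by
      rintro z (hz | hz) <;>
        simp only [Set.mem_preimage, Set.mem_singleton_iff] at hz ⊢
      · rw [← hcomm, hz]
      · rw [← hcomm, hz, hpq]
    have hdisj : Disjoint (π ⁻¹' {Quotient.mk'' x}) (π ⁻¹' {Quotient.mk'' y}) := by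
      apply Set.disjoint_left.mpr
      intro z hz1 hz2
      simp only [Set.mem_preimage, Set.mem_singleton_iff] at hz1 hz2
      exact hne' (hz1.symm.trans hz2)
    have h1 : μ (π ⁻¹' {Quotient.mk'' x} ∪ π ⁻¹' {Quotient.mk'' y})
        = μ (N : Set G) + μ (N : Set G) := by
      rw [measure_union hdisj (hcoset_open _).measurableSet, hcoset_meas, hcoset_meas]
    have h2 : μ (T ⁻¹' (π ⁻¹' {f (Quotient.mk'' x)})) = μ (N : Set G) := by
      rw [hMP _ (hcoset_open _).measurableSet, hcoset_meas]
    have h3 : μ (N : Set G) + μ (N : Set G) ≤ μ (N : Set G) := by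
      rw [← h1, ← h2]; exact measure_mono hsub
    have : μ (N : Set G) ≤ 0 :=
      (ENNReal.add_le_add_iff_left hc_fin).mp (h3.trans_eq (add_zero _).symm)
    exact absurd (le_antisymm this zero_le) (ne_of_lt hc_pos).symm
  -- find n with f^[n] 1 = 1
  obtain ⟨a, b, hab, heq⟩ := Finite.exists_ne_map_eq_of_infinite
    (fun m : ℕ => f^[m] (1 : G ⧸ N))
  wlog hlt : a < b generalizing a b
  · exact this b a hab.symm heq.symm (by omega)
  have hfix : f^[b - a] (1 : G ⧸ N) = 1 := by
    have hiter : f^[a] (f^[b - a] (1 : G ⧸ N)) = f^[a] (1 : G ⧸ N) := by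
      rw [← Function.iterate_add_apply]
      have : a + (b - a) = b := by omega
      rw [this]
      exact heq.symm
    exact hinj.iterate a hiter
  refine ⟨b - a, by omega, ?_⟩
  intro H
  set S : Set G := π ⁻¹' {(1 : G ⧸ N)} with hS
  have hSmeas : MeasurableSet S := (hcoset_open _).measurableSet
  have hSinv : T^[b - a] ⁻¹' S = S := by
    ext x
    simp only [hS, Set.mem_preimage, Set.mem_singleton_iff]
    rw [← hcommn]
    constructor
    · intro h
      exact hinj.iterate (b - a) (by rw [h, hfix])
    · intro h
      rw [h, hfix]
  have hSμ : μ S = μ (N : Set G) := hcoset_meas _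
  rcases H S hSmeas hSinv with h0 | h1
  · rw [hSμ] at h0; exact absurd h0 (ne_of_lt hc_pos).symm
  · -- find a coset disjoint from S
    obtain ⟨g, hg⟩ : ∃ g : G, g ∉ N := by
      by_contra h
      push_neg at h
      exact hne (Subgroup.eq_top_iff' N |>.mpr h)
    have hq : π g ≠ (1 : G ⧸ N) := by
      intro h
      exact hg ((QuotientGroup.eq_one_iff g).mp h)
    have hdisj : Disjoint (π ⁻¹' {π g}) S := by
      apply Set.disjoint_left.mpr
      intro z hz1 hz2
      simp only [hS, Set.mem_preimage, Set.mem_singleton_iff] at hz1 hz2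
      exact hq (hz1 ▸ hz2)
    have hcompl : μ Sᶜ = 0 := by
      rw [measure_compl hSmeas (measure_ne_top μ S), h1, measure_univ, tsub_self]
    have : μ (π ⁻¹' {π g}) = 0 :=
      le_antisymm (le_trans (measure_mono hdisj.subset_compl_right) hcompl.le) zero_le
    rw [hcoset_meas] at this
    exact absurd this (ne_of_lt hc_pos).symm
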